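/- Let d be even and let F be a self-adjoint operator on ℂ^d with Q_{ij}(F) real for all i,j ∈ ℤ_d (F ∈ KD^r). Then for every i ∈ ℤ_d the entry F_{i,(i+d/2)} = ⟨a_i|F|a_{i+d/2}⟩ (index mod d) is a real number. -/

import Mathlib

open Complex Matrix
open scoped ComplexOrder

noncomputable section

/-- `omega n = exp(2 π i / n)`, a primitive `n`-th root of unity. -/
def omega (n : ℕ) : ℂ := Complex.exp (2 * Real.pi * Complex.I / n)

/-- The standard basis vector `a i` of `ℂ^d`. -/
def stdVec (d : ℕ) (i : Fin d) : Fin d → ℂ := fun k => if k = i then 1 else 0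

/-- The Fourier (DFT) basis vector `b j = (1/√d) ∑ i, ω_d^(i j) • a i`. -/
def fourierVec (d : ℕ) (j : Fin d) : Fin d → ℂ :=
  fun i => ((1 / Real.sqrt d : ℝ) : ℂ) * omega d ^ (i.val * j.val)

/-- The rank-one projector `|v⟩⟨v|` of a vector `v`, as a matrix. -/
def proj (d : ℕ) (v : Fin d → ℂ) : Matrix (Fin d) (Fin d) ℂ :=
  Matrix.of fun i k => v i * (starRingEnd ℂ) (v k)

/-- The Kirkwood-Dirac quasiprobability `Q i j F = ⟨b j|a i⟩ * ⟨a i|F|b j⟩`. -/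
def KDQ (d : ℕ) (F : Matrix (Fin d) (Fin d) ℂ) (i j : Fin d) : ℂ :=
  (starRingEnd ℂ) (fourierVec d j i) * ∑ k, F i k * fourierVec d j k

/-- The set `KD⁺` of KD classical density matrices: positive semidefinite, trace one,
and all KD quasiprobabilities are nonnegative reals. -/
def KDplus (d : ℕ) : Set (Matrix (Fin d) (Fin d) ℂ) :=
  {ρ | ρ.PosSemidef ∧ ρ.trace = 1 ∧
    ∀ i j, (KDQ d ρ i j).im = 0 ∧ 0 ≤ (KDQ d ρ i j).re}

/-- The set `KD^r` of self-adjoint operators whose KD distribution is everywhere real. -/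
def KDr (d : ℕ) : Set (Matrix (Fin d) (Fin d) ℂ) :=
  {F | F.IsHermitian ∧ ∀ i j, (KDQ d F i j).im = 0}

/-- `A = {|a i⟩⟨a i| : i ∈ ℤ_d}`. -/
def setA (d : ℕ) : Set (Matrix (Fin d) (Fin d) ℂ) :=
  {M | ∃ i : Fin d, M = proj d (stdVec d i)}

/-- `B = {|b j⟩⟨b j| : j ∈ ℤ_d}`. -/
def setB (d : ℕ) : Set (Matrix (Fin d) (Fin d) ℂ) :=
  {M | ∃ j : Fin d, M = proj d (fourierVec d j)}

/-- For `d = p * q` : `ψ m s = (1/√q) ∑ k ∈ ℤ_q, ω_q^(s k) • a (k p + m)`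
(so the `i`-th coordinate is nonzero iff `i ≡ m [MOD p]`, with `k = i / p`). -/
def psiPQ (d p q : ℕ) (m : Fin p) (s : Fin q) : Fin d → ℂ :=
  fun i => if i.val % p = m.val then
    ((1 / Real.sqrt q : ℝ) : ℂ) * omega q ^ (s.val * (i.val / p)) else 0

/-- For `d = p * q` : `φ m' s' = (1/√p) ∑ k ∈ ℤ_p, ω_p^(s' k) • a (k q + m')`. -/
def phiPQ (d p q : ℕ) (m' : Fin q) (s' : Fin p) : Fin d → ℂ :=
  fun i => if i.val % q = m'.val then
    ((1 / Real.sqrt p : ℝ) : ℂ) * omega p ^ (s'.val * (i.val / q)) else 0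

/-- For `d = p ^ 2` : `C = {|ψ m s⟩⟨ψ m s| : m, s ∈ ℤ_p}`. -/
def setC2 (d p : ℕ) : Set (Matrix (Fin d) (Fin d) ℂ) :=
  {M | ∃ m s : Fin p, M = proj d (psiPQ d p p m s)}

/-- For `d = p * q` : `C = {|ψ m s⟩⟨ψ m s| : m ∈ ℤ_p, s ∈ ℤ_q}`. -/
def setC (d p q : ℕ) : Set (Matrix (Fin d) (Fin d) ℂ) :=
  {M | ∃ (m : Fin p) (s : Fin q), M = proj d (psiPQ d p q m s)}

/-- For `d = p * q` : `D = {|φ m' s'⟩⟨φ m' s'| : m' ∈ ℤ_q, s' ∈ ℤ_p}`. -/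
def setD (d p q : ℕ) : Set (Matrix (Fin d) (Fin d) ℂ) :=
  {M | ∃ (m' : Fin q) (s' : Fin p), M = proj d (phiPQ d p q m' s')}

/-- Matrix entries in the Fourier basis: `⟨b k|G|b j⟩`. -/
def entryB (d : ℕ) (G : Matrix (Fin d) (Fin d) ℂ) (k j : Fin d) : ℂ :=
  ∑ i, ∑ l, (starRingEnd ℂ) (fourierVec d k i) * G i l * fourierVec d j l

open Fin.NatCast in
/-- For even `d ≥ 1` and `F ∈ KD^r` self-adjoint, every entry
`F_{i,(i+d/2)}` is real. -/
theorem stmt17 (d : ℕ) [NeZero d] (hd : Even d) (F : Matrix (Fin d) (Fin d) ℂ)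
    (hF : F.IsHermitian) (hKD : ∀ i j, (KDQ d F i j).im = 0) :
    ∀ i : Fin d, (F i (i + (↑(d / 2) : Fin d))).im = 0 := by
  intro i
  have hdne : d ≠ 0 := NeZero.ne d
  have hdpos : 0 < d := Nat.pos_of_ne_zero hdne
  have h2d : d / 2 * 2 = d := Nat.div_mul_cancel hd.two_dvd
  set ω : ℂ := omega d with hω
  have hprim : IsPrimitiveRoot ω d := Complex.isPrimitiveRoot_exp d hdne
  have hω1 : ω ^ d = 1 := hprim.pow_eq_one
  have hωne : ω ≠ 0 := hprim.ne_zero hdne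
  have hdC : (d : ℂ) ≠ 0 := Nat.cast_ne_zero.2 hdne
  have hstar : (starRingEnd ℂ) ω = ω⁻¹ := by
    rw [hω, omega, ← Complex.exp_conj, ← Complex.exp_neg]
    congr 1
    simp [map_div₀, map_ofNat]
    ring
  have hhalf : ω ^ (d / 2) = -1 := by
    rw [hω, omega, ← Complex.exp_nat_mul]
    rw [show ((d / 2 : ℕ) : ℂ) * (2 * Real.pi * Complex.I / d) = Real.pi * Complex.I by
      have hc : ((d / 2 : ℕ) : ℂ) * 2 = (d : ℂ) := by exact_mod_cast congrArg (Nat.cast : ℕ → ℂ) h2d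
      field_simp
      linear_combination hc]
    exact Complex.exp_pi_mul_I
  have hmod : ∀ a : ℕ, ω ^ a = ω ^ (a % d) := by
    intro a
    conv_lhs => rw [← Nat.div_add_mod a d]
    rw [pow_add, pow_mul, hω1, one_pow, one_mul]
  set k0 : Fin d := i + (↑(d / 2) : Fin d) with hk0
  have hk0v : k0.val = (i.val + d / 2) % d := by
    simp [hk0, Fin.add_def, Fin.val_natCast]
  set ζ : Fin d → ℂ := fun k => ω ^ k.val * (ω ^ i.val)⁻¹ * (-1) with hζ
  have hm : ∀ a : ℕ, a < d → ((a + d / 2) % d = a + d / 2 ∨ (a + d / 2) % d + d = a + d / 2) := by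
    intro a ha
    rcases lt_or_ge (a + d / 2) d with h | h
    · exact Or.inl (Nat.mod_eq_of_lt h)
    · right
      have he : a + d / 2 = (a + d / 2 - d) + d := by omega
      rw [he, Nat.add_mod_right, Nat.mod_eq_of_lt (by omega)]
  have hζiff : ∀ k : Fin d, ζ k = 1 ↔ k = k0 := by
    intro k
    have hζeq : ζ k = ω ^ (k.val + d / 2) / ω ^ i.val := by
      simp only [hζ]
      rw [← hhalf, pow_add]
      ring
    rw [hζeq, div_eq_one_iff_eq (pow_ne_zero _ hωne), hmod]
    constructor
    · intro h
      have h' := hprim.pow_inj (Nat.mod_lt _ hdpos) i.isLt h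
      have hk := k.isLt
      have hi := i.isLt
      have hl1 : (k.val + d / 2) % d < d := Nat.mod_lt _ hdpos
      have hl2 : (i.val + d / 2) % d < d := Nat.mod_lt _ hdpos
      rcases hm k.val hk with h1 | h1 <;> rcases hm i.val hi with h2 | h2 <;>
        exact Fin.ext (by omega)
    · intro h
      subst h
      congr 1
      have hi := i.isLt
      have hk0lt := k0.isLt
      have hl1 : (k0.val + d / 2) % d < d := Nat.mod_lt _ hdpos
      have hl2 : (i.val + d / 2) % d < d := Nat.mod_lt _ hdpos
      rcases hm k0.val hk0lt with h1 | h1 <;> rcases hm i.val hi with h2 | h2 <;> omega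
  have hζd : ∀ k : Fin d, ζ k ^ d = 1 := by
    intro k
    have h1 : (ω ^ k.val) ^ d = 1 := by rw [← pow_mul, mul_comm, pow_mul, hω1, one_pow]
    have h2 : (ω ^ i.val) ^ d = 1 := by rw [← pow_mul, mul_comm, pow_mul, hω1, one_pow]
    simp only [hζ]
    rw [mul_pow, mul_pow, inv_pow, h1, h2, hd.neg_one_pow]
    norm_num
  have key : ∀ k : Fin d, ∑ j : Fin d, ζ k ^ (j : ℕ) = if k = k0 then (d : ℂ) else 0 := by
    intro k
    by_cases hk : k = k0
    · rw [if_pos hk, (hζiff k).2 hk]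
      simp
    · rw [if_neg hk, Fin.sum_univ_eq_sum_range,
        geom_sum_eq (fun h => hk ((hζiff k).1 h)) d, hζd k]
      simp
  set c : ℂ := ((1 / Real.sqrt d : ℝ) : ℂ) with hc
  have hcc : c * c * d = 1 := by
    have h0 : (0 : ℝ) ≤ d := Nat.cast_nonneg d
    have hs : Real.sqrt d ≠ 0 := ne_of_gt (Real.sqrt_pos.2 (by exact_mod_cast hdpos))
    have hss : Real.sqrt d * Real.sqrt d = d := Real.mul_self_sqrt h0
    rw [hc, show ((d : ℂ)) = ((d : ℝ) : ℂ) by push_cast; ring, ← Complex.ofReal_mul,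
      ← Complex.ofReal_mul]
    rw [show (1 / Real.sqrt d * (1 / Real.sqrt d) * d : ℝ) = 1 by
      field_simp
      rw [Real.sq_sqrt h0]]
    norm_num
  have hmain : ∑ j : Fin d, KDQ d F i j * (-1 : ℂ) ^ (j : ℕ) = F i k0 := by
    have step1 : ∀ j : Fin d, KDQ d F i j * (-1 : ℂ) ^ (j : ℕ)
        = ∑ k, (c * c * F i k) * ζ k ^ (j : ℕ) := by
      intro j
      rw [KDQ, Finset.mul_sum, Finset.sum_mul]
      refine Finset.sum_congr rfl fun k _ => ?_
      have hcstar : (starRingEnd ℂ) c = c := by rw [hc]; exact Complex.conj_ofReal _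
      simp only [fourierVec, _root_.map_mul, map_pow, ← hω, hstar, Complex.conj_ofReal,
        hζ, ← hc]
      rw [hcstar, inv_pow, pow_mul, pow_mul, mul_pow, mul_pow]
      ring
    rw [Finset.sum_congr rfl fun j _ => step1 j, Finset.sum_comm]
    rw [Finset.sum_congr rfl fun k (_ : k ∈ Finset.univ) => by
      rw [← Finset.mul_sum, key k]]
    simp only [mul_ite, mul_zero]
    rw [Finset.sum_ite_eq' Finset.univ k0 fun k => c * c * F i k * d]
    rw [if_pos (Finset.mem_univ k0)]
    rw [show c * c * F i k0 * d = (c * c * d) * F i k0 by ring, hcc, one_mul]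
  rw [← hmain, Complex.im_sum]
  refine Finset.sum_eq_zero fun j _ => ?_
  rw [Complex.mul_im, hKD i j]
  rw [show ((-1 : ℂ)) = ((-1 : ℝ) : ℂ) by norm_num, ← Complex.ofReal_pow,
    Complex.ofReal_im]
  ring
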